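/- Fix τ ∈ K with τ ≠ 0, char K = 0, and let ω(x) be the compositional inverse of x(1-x)^τ. Define y = 1/(1-(1+τ)ω) ∈ K[[x]]. Then y = 1 + ((1+τ)/τ)·Σ_{n≥1} (∏_{a=0}^{n-1}(nτ+a)/n!) x^n. -/

import Mathlib

open PowerSeries Finset

variable {K : Type*} [Field K]

/-- The compositional inverse `ω(x) = ∑_{n≥1} (∏_{a=0}^{n-2}(nτ+a)/n!) x^n`
of `x(1-x)^τ`. -/
noncomputable def omegaSeries [CharZero K] (τ : K) : PowerSeries K :=
  PowerSeries.mk fun n =>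
    if n = 0 then 0 else (∏ a ∈ Finset.range (n - 1), ((n : K) * τ + a)) / (n.factorial : K)

section RotheAux

open Polynomial
set_option linter.unusedSectionVars false

variable [CharZero K]

noncomputable def wC (τ : K) (n : ℕ) : K :=
  if n = 0 then 0 else (∏ a ∈ Finset.range (n - 1), ((n : K) * τ + a)) / (n.factorial : K)

noncomputable def sC (τ : K) (n : ℕ) : K :=
  if n = 0 then 0 else (∏ a ∈ Finset.range n, ((n : K) * τ + a)) / (n.factorial : K)


noncomputable def DD (z : K) (m : ℕ) (y : K) : K :=
  (∏ a ∈ range m, (y + m * z - a)) / m.factorial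

noncomputable def AA (z : K) (k : ℕ) (x : K) : K :=
  if k = 0 then 1 else x * (∏ a ∈ range (k - 1), (x + k * z - (a + 1))) / k.factorial

lemma DD_zero (z y : K) : DD z 0 y = 1 := by simp [DD]

omit [CharZero K] in
lemma AA_zero (z x : K) : AA z 0 x = 1 := by simp [AA]

omit [CharZero K] in
lemma AA_zero_arg (z : K) (k : ℕ) (hk : k ≠ 0) : AA z k 0 = 0 := by
  simp [AA, hk]

lemma DD_pascal (z : K) (m : ℕ) (y : K) :
    DD z (m + 1) y = DD z (m + 1) (y - 1) + DD z m (y + z - 1) := by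
  have hm : ((m + 1).factorial : K) ≠ 0 := Nat.cast_ne_zero.2 (Nat.factorial_ne_zero _)
  have hm' : ((m).factorial : K) ≠ 0 := Nat.cast_ne_zero.2 (Nat.factorial_ne_zero _)
  set v : K := y + ((m : K) + 1) * z with hv
  set P : K := ∏ a ∈ range m, (v - 1 - a) with hP
  have e1 : (∏ a ∈ range (m + 1), (y + ((m + 1 : ℕ) : K) * z - (a : K))) = P * v := by
    rw [prod_range_succ']
    congr 1
    · exact prod_congr rfl fun a _ => by push_cast; ring
    · push_cast; ring
  have e2 : (∏ a ∈ range (m + 1), ((y - 1) + ((m + 1 : ℕ) : K) * z - (a : K)))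
      = P * (v - 1 - m) := by
    rw [prod_range_succ]
    congr 1
    · exact prod_congr rfl fun a _ => by push_cast; ring
    · push_cast; ring
  have e3 : (∏ a ∈ range m, ((y + z - 1) + (m : K) * z - (a : K))) = P := by
    exact prod_congr rfl fun a _ => by push_cast; ring
  rw [DD, DD, DD, e1, e2, e3]
  rw [div_add_div _ _ hm hm', div_eq_div_iff hm (by exact mul_ne_zero hm hm')]
  push_cast [Nat.factorial_succ]
  ring

lemma AA_rec (z : K) (k : ℕ) (x : K) :
    AA z (k + 1) x = AA z (k + 1) (x - 1) + AA z k (x + z - 1) := by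
  rcases Nat.eq_zero_or_pos k with rfl | hk
  · simp [AA]
  obtain ⟨j, rfl⟩ : ∃ j, k = j + 1 := ⟨k - 1, by omega⟩
  have hf : (((j + 2).factorial : K)) ≠ 0 := Nat.cast_ne_zero.2 (Nat.factorial_ne_zero _)
  have hf' : (((j + 1).factorial : K)) ≠ 0 := Nat.cast_ne_zero.2 (Nat.factorial_ne_zero _)
  set u : K := x + ((j : K) + 2) * z with hu
  set P : K := ∏ a ∈ range j, (u - a - 2) with hP
  have e1 : (∏ a ∈ range (j + 1), (x + ((j + 1 + 1 : ℕ) : K) * z - ((a : K) + 1)))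
      = P * (u - 1) := by
    rw [prod_range_succ']
    congr 1
    · exact prod_congr rfl fun a _ => by push_cast; ring
    · push_cast; ring
  have e2 : (∏ a ∈ range (j + 1), ((x - 1) + ((j + 1 + 1 : ℕ) : K) * z - ((a : K) + 1)))
      = P * (u - j - 2) := by
    rw [prod_range_succ]
    congr 1
    · exact prod_congr rfl fun a _ => by push_cast; ring
    · push_cast; ring
  have e3 : (∏ a ∈ range j, ((x + z - 1) + ((j + 1 : ℕ) : K) * z - ((a : K) + 1))) = P := by
    exact prod_congr rfl fun a _ => by push_cast; ring
  simp only [AA, Nat.succ_ne_zero, if_false, Nat.add_sub_cancel]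
  rw [e1, e2, e3]
  rw [div_add_div _ _ hf hf', div_eq_div_iff hf (mul_ne_zero hf hf')]
  push_cast [Nat.factorial_succ]
  ring

noncomputable def DP (z : K) (m : ℕ) : Polynomial K :=
  Polynomial.C ((m.factorial : K))⁻¹ *
    ∏ a ∈ range m, (Polynomial.X + Polynomial.C ((m : K) * z - a))

noncomputable def AP (z : K) (k : ℕ) : Polynomial K :=
  if k = 0 then 1 else
    Polynomial.C ((k.factorial : K))⁻¹ * Polynomial.X *
      ∏ a ∈ range (k - 1), (Polynomial.X + Polynomial.C ((k : K) * z - (a + 1)))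

omit [CharZero K] in
lemma DP_eval (z : K) (m : ℕ) (y : K) : (DP z m).eval y = DD z m y := by
  simp only [DP, DD, eval_mul, eval_C, eval_prod, eval_add, eval_X]
  rw [div_eq_inv_mul]
  congr 1
  exact prod_congr rfl fun a _ => by ring

omit [CharZero K] in
lemma AP_eval (z : K) (k : ℕ) (x : K) : (AP z k).eval x = AA z k x := by
  rcases eq_or_ne k 0 with rfl | hk
  · simp [AP, AA]
  · simp only [AP, AA, hk, if_false, eval_mul, eval_C, eval_X, eval_prod, eval_add]
    rw [div_eq_inv_mul]
    have hp : (∏ a ∈ range (k - 1), (x + ((k : K) * z - ((a : K) + 1))))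
        = ∏ a ∈ range (k - 1), (x + (k : K) * z - ((a : K) + 1)) :=
      prod_congr rfl fun a _ => by ring
    rw [hp]; ring

/-- A polynomial function invariant under the shift `x ↦ x - 1` is constant. -/
lemma eval_eq_eval_zero_of_shift (P : Polynomial K)
    (h : ∀ x : K, P.eval x = P.eval (x - 1)) (x : K) : P.eval x = P.eval 0 := by
  have hnat : ∀ n : ℕ, P.eval (n : K) = P.eval 0 := by
    intro n
    induction n with
    | zero => simp
    | succ n ih =>
        push_cast
        rw [h ((n : K) + 1)]
        have harg : ((n : K) + 1 - 1) = (n : K) := by ring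
        rw [harg, ih]
  have hQ : P - Polynomial.C (P.eval 0) = 0 := by
    apply Polynomial.eq_zero_of_infinite_isRoot
    apply Set.Infinite.mono (s := Set.range ((↑) : ℕ → K))
    · rintro _ ⟨n, rfl⟩
      simp [Polynomial.IsRoot, hnat n]
    · exact Set.infinite_range_of_injective Nat.cast_injective
  have := congrArg (Polynomial.eval x) hQ
  simpa [sub_eq_zero] using this

theorem rothe (z : K) : ∀ n : ℕ, ∀ x y : K,
    (∑ k ∈ range (n + 1), AA z k x * DD z (n - k) y) = DD z n (x + y) := by
  intro n
  induction n with
  | zero => intro x y; simp [AA_zero, DD_zero]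
  | succ n ih =>
    intro x y
    set P : Polynomial K :=
      (∑ k ∈ range (n + 2), AP z k * Polynomial.C (DD z (n + 1 - k) y)) -
        (DP z (n + 1)).comp (Polynomial.X + Polynomial.C y) with hPdef
    have hev : ∀ t : K, P.eval t =
        (∑ k ∈ range (n + 2), AA z k t * DD z (n + 1 - k) y) - DD z (n + 1) (t + y) := by
      intro t
      simp [hPdef, Polynomial.eval_finset_sum, Polynomial.eval_comp, AP_eval, DP_eval]
    have hstep : ∀ t : K, P.eval t = P.eval (t - 1) := by
      intro t
      rw [hev, hev, sub_eq_sub_iff_sub_eq_sub]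
      have hsplit : (∑ k ∈ range (n + 2), AA z k t * DD z (n + 1 - k) y) -
          (∑ k ∈ range (n + 2), AA z k (t - 1) * DD z (n + 1 - k) y)
          = ∑ k ∈ range (n + 1), AA z k (t + z - 1) * DD z (n - k) y := by
        rw [← Finset.sum_sub_distrib]
        rw [Finset.sum_range_succ']
        have h0 : (AA z 0 t * DD z (n + 1 - 0) y - AA z 0 (t - 1) * DD z (n + 1 - 0) y) = 0 := by
          rw [AA_zero, AA_zero]; ring
        rw [h0, add_zero]
        refine Finset.sum_congr rfl fun k _ => ?_
        have := AA_rec z k t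
        have hsub : n + 1 - (k + 1) = n - k := by omega
        rw [hsub, ← sub_mul]
        have : AA z (k + 1) t - AA z (k + 1) (t - 1) = AA z k (t + z - 1) := by
          rw [AA_rec z k t]; ring
        rw [this]
      rw [hsplit, ih]
      have := DD_pascal z n (t + y)
      have h1 : t + y - 1 = t - 1 + y := by ring
      have h2 : t + y + z - 1 = t + z - 1 + y := by ring
      rw [h1, h2] at this
      linear_combination (-1 : K) * this
    have h0 : P.eval 0 = 0 := by
      rw [hev]
      have hsum : (∑ k ∈ range (n + 2), AA z k (0 : K) * DD z (n + 1 - k) y)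
          = DD z (n + 1) y := by
        rw [Finset.sum_range_succ']
        have : ∀ k ∈ range (n + 1), AA z (k + 1) (0 : K) * DD z (n + 1 - (k + 1)) y = 0 := by
          intro k _
          rw [AA_zero_arg z (k + 1) (Nat.succ_ne_zero k)]; ring
        rw [Finset.sum_congr rfl this]
        simp [AA_zero]
      rw [hsum]
      simp
    have := eval_eq_eval_zero_of_shift P hstep x
    rw [hev, h0] at this
    have := sub_eq_zero.mp this
    exact this

lemma spec1 (τ : K) (m : ℕ) (hm : m ≠ 0) : DD (τ + 1) m (-1) = sC τ m := by
  rw [DD, sC, if_neg hm]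
  congr 1
  rw [← prod_range_reflect (fun j => (m : K) * τ + j) m]
  refine prod_congr rfl fun j hj => ?_
  have hj' := mem_range.mp hj
  have h1 : m - 1 - j = m - (j + 1) := by omega
  rw [h1, Nat.cast_sub (by omega)]
  push_cast
  ring

lemma spec2 (τ : K) (k : ℕ) (hk : k ≠ 0) : AA (τ + 1) k (-1) = -(wC τ k) := by
  rw [AA, if_neg hk, wC, if_neg hk]
  rw [neg_div', neg_one_mul]
  congr 2
  rw [← prod_range_reflect (fun j => (k : K) * τ + j) (k - 1)]
  refine prod_congr rfl fun j hj => ?_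
  have hj' := mem_range.mp hj
  have h1 : k - 1 - 1 - j = k - (j + 2) := by omega
  rw [h1, Nat.cast_sub (by omega)]
  push_cast
  ring

lemma spec3 (τ : K) (n : ℕ) (hn : n ≠ 0) :
    DD (τ + 1) n (-2) = ((n : K) * τ - 1) * wC τ n := by
  obtain ⟨m, rfl⟩ : ∃ m, n = m + 1 := ⟨n - 1, by omega⟩
  rw [DD, wC, if_neg hn]
  have h : (∏ a ∈ range (m + 1), (-2 + ((m + 1 : ℕ) : K) * (τ + 1) - a))
      = ∏ j ∈ range (m + 1), (((m + 1 : ℕ) : K) * τ - 1 + j) := by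
    rw [← prod_range_reflect (fun j => ((m + 1 : ℕ) : K) * τ - 1 + j) (m + 1)]
    refine prod_congr rfl fun j hj => ?_
    have hj' := mem_range.mp hj
    rw [Nat.cast_sub (by omega)]
    push_cast
    ring
  rw [h, prod_range_succ']
  have h2 : (∏ j ∈ range m, (((m + 1 : ℕ) : K) * τ - 1 + ((j : K) + 1)))
      = ∏ a ∈ range (m + 1 - 1), (((m + 1 : ℕ) : K) * τ + a) := by
    refine prod_congr rfl fun j hj => by push_cast; ring
  push_cast at h2 ⊢
  rw [h2]
  push_cast
  ring

lemma spec4 (τ : K) (n : ℕ) (hn : n ≠ 0) :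
    sC τ n = ((n : K) * τ + n - 1) * wC τ n := by
  obtain ⟨m, rfl⟩ : ∃ m, n = m + 1 := ⟨n - 1, by omega⟩
  rw [sC, wC, if_neg hn, if_neg hn, prod_range_succ]
  push_cast
  ring

theorem key (τ : K) (n : ℕ) (hn : n ≠ 0) :
    sC τ n = τ * wC τ n + (1 + τ) * ∑ k ∈ range (n + 1), wC τ k * sC τ (n - k) := by
  obtain ⟨m, rfl⟩ : ∃ m, n = m + 1 := ⟨n - 1, by omega⟩
  have hr := rothe (τ + 1) (m + 1) (-1) (-1)
  have hsum : (∑ k ∈ range (m + 2), (AA (τ + 1) k (-1) * DD (τ + 1) (m + 1 - k) (-1)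
      + wC τ k * sC τ (m + 1 - k)))
      = sC τ (m + 1) - wC τ (m + 1) := by
    rw [sum_range_succ, sum_range_succ']
    have hmid : ∀ k ∈ range m, (AA (τ + 1) (k + 1) (-1) * DD (τ + 1) (m + 1 - (k + 1)) (-1)
        + wC τ (k + 1) * sC τ (m + 1 - (k + 1))) = 0 := by
      intro k hk
      have h1 : m + 1 - (k + 1) = m - k := by omega
      have h2 : m - k ≠ 0 := by have := mem_range.mp hk; omega
      rw [h1, spec2 τ (k + 1) (Nat.succ_ne_zero k), spec1 τ (m - k) h2]
      ring
    rw [Finset.sum_congr rfl hmid, Finset.sum_const_zero]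
    rw [AA_zero, Nat.sub_zero, spec1 τ (m + 1) (Nat.succ_ne_zero m)]
    rw [spec2 τ (m + 1) (Nat.succ_ne_zero m), Nat.sub_self, DD_zero]
    have hw0 : wC τ 0 = 0 := by simp [wC]
    have hs0 : sC τ 0 = 0 := by simp [sC]
    rw [hw0, hs0]
    ring
  rw [Finset.sum_add_distrib] at hsum
  rw [show m + 1 + 1 = m + 2 from rfl] at hr ⊢
  rw [show (-1 + -1 : K) = -2 from by norm_num] at hr
  have h3 := spec3 τ (m + 1) (Nat.succ_ne_zero m)
  have h4 := spec4 τ (m + 1) (Nat.succ_ne_zero m)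
  linear_combination (-τ) * h4 - (1 + τ) * hsum + (1 + τ) * hr + (1 + τ) * h3

end RotheAux

/-- With `y = 1/(1-(1+τ)ω)`, one has
`y = 1 + ((1+τ)/τ) ∑_{n≥1} (∏_{a=0}^{n-1}(nτ+a)/n!) x^n`. -/
theorem y_series_expansion [CharZero K] (τ : K) (hτ : τ ≠ 0) :
    (1 - PowerSeries.C (1 + τ) * omegaSeries τ)⁻¹
      = 1 + PowerSeries.C ((1 + τ) / τ) *
          PowerSeries.mk (fun n =>
            if n = 0 then 0
            else (∏ a ∈ Finset.range n, ((n : K) * τ + a)) / (n.factorial : K)) := by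
  have homega : omegaSeries τ = PowerSeries.mk (wC τ) := rfl
  have hg : PowerSeries.mk (fun n =>
      if n = 0 then 0
      else (∏ a ∈ Finset.range n, ((n : K) * τ + a)) / (n.factorial : K))
      = PowerSeries.mk (sC τ) := rfl
  rw [homega, hg]
  set ω : PowerSeries K := PowerSeries.mk (wC τ) with hω
  set g : PowerSeries K := PowerSeries.mk (sC τ) with hgdef
  have E : g = PowerSeries.C τ * ω + PowerSeries.C (1 + τ) * (ω * g) := by
    ext n
    rcases eq_or_ne n 0 with rfl | hn
    · simp [hgdef, hω, PowerSeries.coeff_mk, sC, wC]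
    · rw [map_add, PowerSeries.coeff_C_mul, PowerSeries.coeff_C_mul, PowerSeries.coeff_mul]
      rw [Finset.Nat.sum_antidiagonal_eq_sum_range_succ_mk]
      simp only [hgdef, hω, PowerSeries.coeff_mk]
      exact key τ n hn
  have hconst : PowerSeries.constantCoeff (1 - PowerSeries.C (1 + τ) * ω) ≠ 0 := by
    simp [hω, PowerSeries.coeff_mk, wC, PowerSeries.constantCoeff_mk]
  rw [PowerSeries.inv_eq_iff_mul_eq_one hconst]
  have hc : PowerSeries.C ((1 + τ) / τ) * PowerSeries.C τ = PowerSeries.C (1 + τ) := by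
    rw [← map_mul]
    congr 1
    field_simp
  linear_combination (PowerSeries.C ((1 + τ) / τ)) * E + ω * hc
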